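/- For any nonempty duplicate-free list S = (s_1, …, s_k) of products, the expected revenue of the sequence is at most the largest MNL revenue over its prefixes: f(S) ≤ max_{1 ≤ t ≤ k} g({s_1, …, s_t}). -/

import Mathlib

/-- MNL expected revenue of a finite set `S` of products, where product `i`
has revenue `α i` and preference weight `β i`. -/
noncomputable def g (α β : ℕ → ℝ) (S : Finset ℕ) : ℝ :=
  (∑ i ∈ S, α i * β i) / ((∑ i ∈ S, β i) + 1)

/-- Reachability of (0-based) position `t` of the sequence `S` under the
cascade browse model: the product of the continuation probabilities of all
earlier products. -/
noncomputable def reach (θ : ℕ → ℝ) (S : List ℕ) (t : ℕ) : ℝ :=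
  ∏ j ∈ Finset.range t, θ (S.getD j 0)

/-- Expected revenue of a sequence of products `S` under the cascade browse
model combined with the MNL choice model. -/
noncomputable def f (α β θ : ℕ → ℝ) (S : List ℕ) : ℝ :=
  (∑ t ∈ Finset.range (S.length - 1),
      reach θ S t * (1 - θ (S.getD t 0)) * g α β (S.take (t + 1)).toFinset)
    + reach θ S (S.length - 1) * g α β S.toFinset

/-- the expected revenue of a nonempty duplicate-free sequence is
at most the largest MNL revenue over its prefixes. -/
theorem stmt2 (α β θ : ℕ → ℝ) (hα : ∀ i, 0 ≤ α i) (hβ : ∀ i, 0 ≤ β i)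
    (hθ : ∀ i, 0 ≤ θ i ∧ θ i ≤ 1)
    (S : List ℕ) (hS : S ≠ []) (hnd : S.Nodup) :
    f α β θ S ≤ (Finset.range S.length).sup'
      (by simpa [Finset.nonempty_range_iff, List.length_eq_zero_iff] using hS)
      (fun t => g α β (S.take (t + 1)).toFinset) := by
  have hne : (Finset.range S.length).Nonempty := by
    simpa [Finset.nonempty_range_iff, List.length_eq_zero_iff] using hS
  set M := (Finset.range S.length).sup' hne
      (fun t => g α β (S.take (t + 1)).toFinset) with hM
  have hk : 1 ≤ S.length := List.length_pos_iff.mpr hS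
  have hreach : ∀ t, 0 ≤ reach θ S t := fun t =>
    Finset.prod_nonneg (fun j _ => (hθ _).1)
  have hstep : ∀ t, reach θ S (t + 1) = reach θ S t * θ (S.getD t 0) := by
    intro t; simp [reach, Finset.prod_range_succ]
  have hgle : ∀ t ∈ Finset.range S.length, g α β (S.take (t + 1)).toFinset ≤ M :=
    fun t ht => Finset.le_sup' (fun t => g α β (S.take (t + 1)).toFinset) ht
  have hgnn : ∀ T : Finset ℕ, 0 ≤ g α β T := by
    intro T
    apply div_nonneg
    · exact Finset.sum_nonneg fun i _ => mul_nonneg (hα i) (hβ i)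
    · have := Finset.sum_nonneg (fun i (_ : i ∈ T) => hβ i); linarith
  have hMnn : 0 ≤ M := by
    refine le_trans (hgnn (S.take 1).toFinset) ?_
    exact Finset.le_sup' (fun t => g α β (S.take (t + 1)).toFinset) (Finset.mem_range.mpr hk)
  have hlast : g α β S.toFinset ≤ M := by
    have h := hgle (S.length - 1) (Finset.mem_range.mpr (by omega))
    rwa [Nat.sub_add_cancel hk, List.take_length] at h
  have hsum : ∑ t ∈ Finset.range (S.length - 1),
      (reach θ S t - reach θ S (t + 1)) = 1 - reach θ S (S.length - 1) := by
    rw [Finset.sum_range_sub' (fun t => reach θ S t)]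
    simp [reach]
  calc f α β θ S
      ≤ (∑ t ∈ Finset.range (S.length - 1),
          (reach θ S t - reach θ S (t + 1)) * M)
        + reach θ S (S.length - 1) * M := by
        refine add_le_add (Finset.sum_le_sum fun t ht => ?_)
          (mul_le_mul_of_nonneg_left hlast (hreach _))
        have ht' : t ∈ Finset.range S.length := by
          simp only [Finset.mem_range] at ht ⊢; omega
        have hc : 0 ≤ reach θ S t * (1 - θ (S.getD t 0)) :=
          mul_nonneg (hreach t) (by linarith [(hθ (S.getD t 0)).2])
        have : reach θ S t * (1 - θ (S.getD t 0)) * g α β (S.take (t + 1)).toFinset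
            ≤ reach θ S t * (1 - θ (S.getD t 0)) * M :=
          mul_le_mul_of_nonneg_left (hgle t ht') hc
        calc reach θ S t * (1 - θ (S.getD t 0)) * g α β (S.take (t + 1)).toFinset
            ≤ reach θ S t * (1 - θ (S.getD t 0)) * M := this
          _ = (reach θ S t - reach θ S (t + 1)) * M := by rw [hstep t]; ring
    _ = M := by rw [← Finset.sum_mul, hsum]; ring
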